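/- arXiv:2206.09945 — 3 statements merged into one kernel-verified Lean document; each statement's English description precedes it below -/
import Mathlib

section
/- For every K ∈ ℝ^{(n−p)×p}, the matrix λI_p − W is invertible over F and (λI_p − W)·G = V; equivalently, G = (λI_p − W)^{-1}·V, so the SRTR pair (W, V) produced by the state-space formula is a left factorization of G with left factor λI_p − W. -/
open Matrix Polynomial

set_option synthInstance.maxHeartbeats 1000000
set_option maxHeartbeats 1000000

noncomputable section

/-- The field of real rational functions. -/
abbrev FF : Type := RatFunc ℝ

/-- The rational function `λ` (the image of the polynomial indeterminate `X`). -/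
noncomputable def lam : FF := RatFunc.X

/-- Entrywise embedding of a real matrix into matrices over `FF`. -/
noncomputable def mapF {k l : Type} (M : Matrix k l ℝ) : Matrix k l FF :=
  M.map (algebraMap ℝ FF)

/-- The pencil `λ I - M` over `FF`, for a real square matrix `M`. -/
noncomputable def lamI {k : Type} [Fintype k] [DecidableEq k] (M : Matrix k k ℝ) :
    Matrix k k FF := lam • (1 : Matrix k k FF) - mapF M

/-- Entrywise complexification of a real matrix. -/
def mapC {k l : Type} (M : Matrix k l ℝ) : Matrix k l ℂ :=
  M.map (algebraMap ℝ ℂ)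

/-- A real rational function is stable if every complex root of its reduced denominator
has real part `< 0`. -/
def StableF (f : RatFunc ℝ) : Prop :=
  ∀ z : ℂ, ((f.denom).map (algebraMap ℝ ℂ)).IsRoot z → z.re < 0

/-- A real square matrix is Hurwitz if all roots of its characteristic polynomial
have real part `< 0`. -/
def IsHurwitz {k : Type} [Fintype k] [DecidableEq k] (M : Matrix k k ℝ) : Prop :=
  ∀ z : ℂ, ((M.charpoly).map (algebraMap ℝ ℂ)).IsRoot z → z.re < 0

/-- `A_K := K A11 - K A12 K + A21 - A22 K`. -/
noncomputable def AKmat {p r : ℕ} (A11 : Matrix (Fin p) (Fin p) ℝ)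
    (A12 : Matrix (Fin p) (Fin r) ℝ) (A21 : Matrix (Fin r) (Fin p) ℝ)
    (A22 : Matrix (Fin r) (Fin r) ℝ) (K : Matrix (Fin r) (Fin p) ℝ) :
    Matrix (Fin r) (Fin p) ℝ :=
  K * A11 - K * A12 * K + A21 - A22 * K

/-- The `W` member of the SRTR pair obtained from `K`. -/
noncomputable def srtrW {p r : ℕ} (A11 : Matrix (Fin p) (Fin p) ℝ)
    (A12 : Matrix (Fin p) (Fin r) ℝ) (A21 : Matrix (Fin r) (Fin p) ℝ)
    (A22 : Matrix (Fin r) (Fin r) ℝ) (K : Matrix (Fin r) (Fin p) ℝ) :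
    Matrix (Fin p) (Fin p) FF :=
  mapF (A11 - A12 * K) +
    mapF A12 * (lamI (A22 + K * A12))⁻¹ * mapF (AKmat A11 A12 A21 A22 K)

/-- The `V` member of the SRTR pair obtained from `K`. -/
noncomputable def srtrV {p r m : ℕ} (A12 : Matrix (Fin p) (Fin r) ℝ)
    (A22 : Matrix (Fin r) (Fin r) ℝ) (B1 : Matrix (Fin p) (Fin m) ℝ)
    (B2 : Matrix (Fin r) (Fin m) ℝ) (K : Matrix (Fin r) (Fin p) ℝ) :
    Matrix (Fin p) (Fin m) FF :=
  mapF B1 + mapF A12 * (lamI (A22 + K * A12))⁻¹ * mapF (K * B1 + B2)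

/-- The plant transfer function `G = [I_p 0] (λ I_n - A)⁻¹ B`. -/
noncomputable def plantG {p r m : ℕ} (A11 : Matrix (Fin p) (Fin p) ℝ)
    (A12 : Matrix (Fin p) (Fin r) ℝ) (A21 : Matrix (Fin r) (Fin p) ℝ)
    (A22 : Matrix (Fin r) (Fin r) ℝ) (B1 : Matrix (Fin p) (Fin m) ℝ)
    (B2 : Matrix (Fin r) (Fin m) ℝ) : Matrix (Fin p) (Fin m) FF :=
  fromCols (1 : Matrix (Fin p) (Fin p) FF) (0 : Matrix (Fin p) (Fin r) FF) *
    (lamI (fromBlocks A11 A12 A21 A22))⁻¹ * mapF (fromRows B1 B2)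

/-- `(A12, A22)` is observable: `[A22 - μ I ; A12]` has full column rank for all `μ : ℂ`. -/
def ObsPair {p r : ℕ} (A12 : Matrix (Fin p) (Fin r) ℝ)
    (A22 : Matrix (Fin r) (Fin r) ℝ) : Prop :=
  ∀ μ : ℂ, (fromRows (mapC A22 - μ • (1 : Matrix (Fin r) (Fin r) ℂ)) (mapC A12)).rank = r

/-- `(A, B)` is controllable: `[A - μ I, B]` has full row rank for all `μ : ℂ`. -/
def CtrbPair {p r m : ℕ} (A : Matrix (Fin p ⊕ Fin r) (Fin p ⊕ Fin r) ℝ)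
    (B : Matrix (Fin p ⊕ Fin r) (Fin m) ℝ) : Prop :=
  ∀ μ : ℂ, (fromCols (mapC A - μ • (1 : Matrix (Fin p ⊕ Fin r) (Fin p ⊕ Fin r) ℂ))
    (mapC B)).rank = p + r

lemma lamI_eq_charmatrix_map {k : Type} [Fintype k] [DecidableEq k] (M : Matrix k k ℝ) :
    lamI M = (charmatrix M).map (algebraMap ℝ[X] FF) := by
  ext i j
  by_cases h : i = j <;>
    simp [lamI, mapF, h, charmatrix_apply_eq, charmatrix_apply_ne, Matrix.one_apply,
      Matrix.sub_apply, map_sub, RatFunc.algebraMap_X, lam,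
      ← IsScalarTower.algebraMap_apply ℝ ℝ[X] FF]

lemma det_lamI_ne_zero {k : Type} [Fintype k] [DecidableEq k] (M : Matrix k k ℝ) :
    (lamI M).det ≠ 0 := by
  rw [lamI_eq_charmatrix_map]
  have hd : (M.charmatrix.map (algebraMap ℝ[X] FF)).det = algebraMap ℝ[X] FF M.charpoly := by
    rw [Matrix.charpoly]
    simpa [RingHom.mapMatrix_apply] using ((algebraMap ℝ[X] FF).map_det M.charmatrix).symm
  rw [hd]
  have h1 : (M.charpoly : ℝ[X]) ≠ 0 := M.charpoly_monic.ne_zero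
  have h2 : Function.Injective (algebraMap ℝ[X] FF) := IsFractionRing.injective ℝ[X] FF
  exact fun h => h1 (h2 (by simpa using h))

lemma isUnit_lamI {k : Type} [Fintype k] [DecidableEq k] (M : Matrix k k ℝ) :
    IsUnit (lamI M) :=
  (Matrix.isUnit_iff_isUnit_det _).mpr (isUnit_iff_ne_zero.mpr (det_lamI_ne_zero M))

noncomputable def invertibleLamI {k : Type} [Fintype k] [DecidableEq k] (M : Matrix k k ℝ) :
    Invertible (lamI M) := (isUnit_lamI M).nonempty_invertible.some

lemma mapF_mul {k l o : Type} [Fintype l] (M : Matrix k l ℝ) (N : Matrix l o ℝ) :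
    mapF (M * N) = mapF M * mapF N := Matrix.map_mul

lemma mapF_add {k l : Type} (M N : Matrix k l ℝ) : mapF (M + N) = mapF M + mapF N := by
  ext i j; simp [mapF]

lemma mapF_sub {k l : Type} (M N : Matrix k l ℝ) : mapF (M - N) = mapF M - mapF N := by
  ext i j; simp [mapF]

section main
variable {p r m : ℕ} (A11 : Matrix (Fin p) (Fin p) ℝ) (A12 : Matrix (Fin p) (Fin r) ℝ)
    (A21 : Matrix (Fin r) (Fin p) ℝ) (A22 : Matrix (Fin r) (Fin r) ℝ)
    (B1 : Matrix (Fin p) (Fin m) ℝ) (B2 : Matrix (Fin r) (Fin m) ℝ)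
    (K : Matrix (Fin r) (Fin p) ℝ)

lemma hL' : lamI (fromBlocks A11 A12 A21 A22) =
    fromBlocks (lam • 1 - mapF A11) (-(mapF A12)) (-(mapF A21)) (lam • 1 - mapF A22) := by
  rw [lamI, ← fromBlocks_one, mapF, fromBlocks_map, fromBlocks_smul]
  simp [fromBlocks_add, fromBlocks_neg, sub_eq_add_neg, mapF]

lemma hM' :
    (fromBlocks 1 0 (mapF K) 1 : Matrix (Fin p ⊕ Fin r) (Fin p ⊕ Fin r) FF) *
      lamI (fromBlocks A11 A12 A21 A22) * fromBlocks 1 0 (-(mapF K)) 1 =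
    fromBlocks (lam • 1 - mapF (A11 - A12 * K)) (-(mapF A12))
      (-(mapF (AKmat A11 A12 A21 A22 K))) (lamI (A22 + K * A12)) := by
  rw [hL']
  simp only [fromBlocks_multiply, Matrix.one_mul, Matrix.mul_one, Matrix.zero_mul,
    Matrix.mul_zero, add_zero, zero_add]
  rw [fromBlocks_inj]
  refine ⟨?_, ?_, ?_, ?_⟩
  · simp only [mapF_sub, mapF_mul, Matrix.mul_neg, Matrix.neg_mul, Matrix.sub_mul,
      Matrix.mul_sub, Matrix.smul_mul, Matrix.mul_smul, Matrix.one_mul, Matrix.mul_one,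
      neg_neg]
    abel
  · simp
  · simp only [mapF_sub, mapF_add, mapF_mul, AKmat, Matrix.mul_neg, Matrix.neg_mul,
      Matrix.sub_mul, Matrix.mul_sub, Matrix.add_mul, Matrix.mul_add, Matrix.smul_mul,
      Matrix.mul_smul, Matrix.one_mul, Matrix.mul_one, neg_neg, neg_add, neg_sub,
      Matrix.mul_assoc]
    abel
  · simp only [lamI, mapF_add, mapF_mul, Matrix.mul_neg, Matrix.neg_mul, neg_neg,
      Matrix.sub_mul, Matrix.smul_mul, Matrix.one_mul, sub_eq_add_neg, neg_add]
    abel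
end main

/-- For every `K`, `λ I_p - W` is invertible over `FF` and
`(λ I_p - W) * G = V`, so the SRTR pair `(W, V)` is a left factorization of `G`. -/
theorem stmt_0 (p r m : ℕ) (hp : 0 < p) (hr : 0 < r) (hm : 0 < m)
    (A11 : Matrix (Fin p) (Fin p) ℝ) (A12 : Matrix (Fin p) (Fin r) ℝ)
    (A21 : Matrix (Fin r) (Fin p) ℝ) (A22 : Matrix (Fin r) (Fin r) ℝ)
    (B1 : Matrix (Fin p) (Fin m) ℝ) (B2 : Matrix (Fin r) (Fin m) ℝ) :
    ∀ K : Matrix (Fin r) (Fin p) ℝ,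
      IsUnit (lam • (1 : Matrix (Fin p) (Fin p) FF) - srtrW A11 A12 A21 A22 K) ∧
      (lam • (1 : Matrix (Fin p) (Fin p) FF) - srtrW A11 A12 A21 A22 K) *
          plantG A11 A12 A21 A22 B1 B2 = srtrV A12 A22 B1 B2 K := by
  intro K
  haveI iD : Invertible (lamI (A22 + K * A12)) := invertibleLamI _
  haveI iL : Invertible (lamI (fromBlocks A11 A12 A21 A22)) := invertibleLamI _
  set L := lamI (fromBlocks A11 A12 A21 A22) with hLdef
  set T : Matrix (Fin p ⊕ Fin r) (Fin p ⊕ Fin r) FF := fromBlocks 1 0 (mapF K) 1 with hT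
  set T' : Matrix (Fin p ⊕ Fin r) (Fin p ⊕ Fin r) FF := fromBlocks 1 0 (-(mapF K)) 1 with hT'
  have hTT' : T * T' = 1 := by
    rw [hT, hT', ← fromBlocks_one]; simp [fromBlocks_multiply]
  have hT'T : T' * T = 1 := by
    rw [hT, hT', ← fromBlocks_one]; simp [fromBlocks_multiply]
  haveI iT : Invertible T := invertibleOfRightInverse _ _ hTT'
  haveI iT' : Invertible T' := invertibleOfRightInverse _ _ hT'T
  haveI iM : Invertible (T * L * T') := Invertible.mul (Invertible.mul iT iL) iT'
  haveI iMb : Invertible (fromBlocks (lam • 1 - mapF (A11 - A12 * K)) (-(mapF A12))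
      (-(mapF (AKmat A11 A12 A21 A22 K))) (lamI (A22 + K * A12))) :=
    iM.copy _ (hM' A11 A12 A21 A22 K).symm
  haveI iS : Invertible ((lam • 1 - mapF (A11 - A12 * K)) -
      (-(mapF A12)) * ⅟(lamI (A22 + K * A12)) * (-(mapF (AKmat A11 A12 A21 A22 K)))) :=
    Matrix.invertibleOfFromBlocks₂₂Invertible _ _ _ _
  have hS : (lam • 1 - mapF (A11 - A12 * K)) -
      (-(mapF A12)) * ⅟(lamI (A22 + K * A12)) * (-(mapF (AKmat A11 A12 A21 A22 K))) =
      lam • (1 : Matrix (Fin p) (Fin p) FF) - srtrW A11 A12 A21 A22 K := by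
    rw [invOf_eq_nonsing_inv]
    simp [srtrW, sub_sub, Matrix.neg_mul, Matrix.mul_neg, neg_neg]
  refine ⟨?_, ?_⟩
  · rw [← hS]; exact isUnit_of_invertible _
  · rw [← hS]
    -- compute L⁻¹
    have hLfac : T' * (T * L * T') * T = L := by
      calc T' * (T * L * T') * T = (T' * T) * L * (T' * T) := by
            simp only [Matrix.mul_assoc]
          _ = L := by rw [hT'T]; simp
    have hLinv : L⁻¹ = T' * (T * L * T')⁻¹ * T := by
      conv_lhs => rw [← hLfac]
      rw [Matrix.mul_inv_rev, Matrix.mul_inv_rev, Matrix.inv_eq_right_inv hTT',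
        Matrix.inv_eq_right_inv hT'T]
      simp only [Matrix.mul_assoc]
    have hMinv : (T * L * T')⁻¹ =
        fromBlocks (⅟((lam • 1 - mapF (A11 - A12 * K)) -
            (-(mapF A12)) * ⅟(lamI (A22 + K * A12)) * (-(mapF (AKmat A11 A12 A21 A22 K)))))
          (-(⅟((lam • 1 - mapF (A11 - A12 * K)) -
            (-(mapF A12)) * ⅟(lamI (A22 + K * A12)) * (-(mapF (AKmat A11 A12 A21 A22 K)))) *
            (-(mapF A12)) * ⅟(lamI (A22 + K * A12))))
          (-(⅟(lamI (A22 + K * A12)) * (-(mapF (AKmat A11 A12 A21 A22 K))) *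
            ⅟((lam • 1 - mapF (A11 - A12 * K)) -
            (-(mapF A12)) * ⅟(lamI (A22 + K * A12)) * (-(mapF (AKmat A11 A12 A21 A22 K))))))
          (⅟(lamI (A22 + K * A12)) + ⅟(lamI (A22 + K * A12)) *
            (-(mapF (AKmat A11 A12 A21 A22 K))) *
            ⅟((lam • 1 - mapF (A11 - A12 * K)) -
            (-(mapF A12)) * ⅟(lamI (A22 + K * A12)) * (-(mapF (AKmat A11 A12 A21 A22 K)))) *
            (-(mapF A12)) * ⅟(lamI (A22 + K * A12))) := by
      rw [hM' A11 A12 A21 A22 K, ← invOf_eq_nonsing_inv, Matrix.invOf_fromBlocks₂₂_eq]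
    have hB : mapF (fromRows B1 B2) = fromRows (mapF B1) (mapF B2) := by
      ext (i | i) j <;> simp [mapF, fromRows_apply_inl, fromRows_apply_inr]
    have e1 : (fromCols (1 : Matrix (Fin p) (Fin p) FF) (0 : Matrix (Fin p) (Fin r) FF)) * T'
        = fromCols 1 0 := by
      rw [hT', fromCols_mul_fromBlocks]; simp
    have e2 : T * fromRows (mapF B1) (mapF B2) = fromRows (mapF B1) (mapF (K * B1 + B2)) := by
      rw [hT, fromBlocks_mul_fromRows]; simp [mapF_add, mapF_mul]
    rw [plantG, ← hLdef, hLinv, hB]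
    rw [show (fromCols (1 : Matrix (Fin p) (Fin p) FF) (0 : Matrix (Fin p) (Fin r) FF)) *
          (T' * (T * L * T')⁻¹ * T) * fromRows (mapF B1) (mapF B2) =
        (fromCols (1 : Matrix (Fin p) (Fin p) FF) (0 : Matrix (Fin p) (Fin r) FF) * T') *
          (T * L * T')⁻¹ * (T * fromRows (mapF B1) (mapF B2)) from by
      simp only [Matrix.mul_assoc]]
    rw [e1, e2, hMinv, fromCols_mul_fromBlocks, fromCols_mul_fromRows]
    simp only [invOf_eq_nonsing_inv]
    simp only [Matrix.mul_neg, Matrix.neg_mul, neg_neg]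
    simp only [Matrix.one_mul, Matrix.zero_mul, Matrix.mul_zero, add_zero, zero_add]
    simp only [Matrix.mul_add, Matrix.mul_assoc, srtrV]
    have hSu : IsUnit (lam • 1 - mapF (A11 - A12 * K) -
        mapF A12 * ((lamI (A22 + K * A12))⁻¹ * mapF (AKmat A11 A12 A21 A22 K))).det := by
      have heq : (lam • 1 - mapF (A11 - A12 * K) -
          mapF A12 * ((lamI (A22 + K * A12))⁻¹ * mapF (AKmat A11 A12 A21 A22 K))) =
          (lam • 1 - mapF (A11 - A12 * K) -
          -(mapF A12) * ⅟(lamI (A22 + K * A12)) * -(mapF (AKmat A11 A12 A21 A22 K))) := by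
        simp [invOf_eq_nonsing_inv, Matrix.mul_assoc]
      rw [heq, ← Matrix.isUnit_iff_isUnit_det]
      exact isUnit_of_invertible _
    rw [Matrix.mul_nonsing_inv_cancel_left _ _ hSu, Matrix.mul_nonsing_inv_cancel_left _ _ hSu]
end
end

section
/- Let G1 := D̄1 + C̄·(λI_q − Ā)^{-1}·B̄1 ∈ F^{p×p} and G2 := D̄2 + C̄·(λI_q − Ā)^{-1}·B̄2 ∈ F^{p×m}. Then the matrix I_p − λ^{-1}·G1 is invertible over F and (I_p − λ^{-1}·G1)^{-1}·(λ^{-1}·G2) = [I_p 0]·(λI_{p+q} − Â)^{-1}·B̂, where Â := [[D̄1, C̄],[B̄1, Ā]] ∈ ℝ^{(p+q)×(p+q)} and B̂ := [D̄2; B̄2] ∈ ℝ^{(p+q)×m}. -/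
open Matrix Polynomial

set_option synthInstance.maxHeartbeats 1000000
set_option maxHeartbeats 1000000

noncomputable section

lemma detLamI_isUnit {k : Type} [Fintype k] [DecidableEq k] (M : Matrix k k ℝ) :
    IsUnit (lamI M).det := by
  rw [lamI_eq_charmatrix_map, ← RingHom.mapMatrix_apply, ← RingHom.map_det]
  exact isUnit_iff_ne_zero.mpr
    (RatFunc.algebraMap_ne_zero (Matrix.charpoly_monic M).ne_zero)

lemma fromBlocks_sub' {k l o n : Type} (a a' : Matrix k l FF) (b b' : Matrix k n FF)
    (c c' : Matrix o l FF) (d d' : Matrix o n FF) :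
    fromBlocks a b c d - fromBlocks a' b' c' d' =
      fromBlocks (a - a') (b - b') (c - c') (d - d') := by
  ext (i | i) (j | j) <;> simp

lemma mapF_fromRows {k l n : Type} (a : Matrix k n ℝ) (b : Matrix l n ℝ) :
    mapF (fromRows a b) = fromRows (mapF a) (mapF b) := by
  ext (i | i) j <;> simp [mapF]

/-- `I_p - λ⁻¹ G1` is invertible and
`(I_p - λ⁻¹ G1)⁻¹ (λ⁻¹ G2) = [I_p 0] (λ I - Â)⁻¹ B̂` with
`Â = [[D̄1, C̄],[B̄1, Ā]]`, `B̂ = [D̄2; B̄2]`. -/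
theorem stmt_2 (p m q : ℕ) (hp : 0 < p) (hm : 0 < m) (hq : 0 < q)
    (Abar : Matrix (Fin q) (Fin q) ℝ) (Bbar1 : Matrix (Fin q) (Fin p) ℝ)
    (Bbar2 : Matrix (Fin q) (Fin m) ℝ) (Cbar : Matrix (Fin p) (Fin q) ℝ)
    (Dbar1 : Matrix (Fin p) (Fin p) ℝ) (Dbar2 : Matrix (Fin p) (Fin m) ℝ) :
    let G1 : Matrix (Fin p) (Fin p) FF :=
      mapF Dbar1 + mapF Cbar * (lamI Abar)⁻¹ * mapF Bbar1
    let G2 : Matrix (Fin p) (Fin m) FF :=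
      mapF Dbar2 + mapF Cbar * (lamI Abar)⁻¹ * mapF Bbar2
    IsUnit ((1 : Matrix (Fin p) (Fin p) FF) - lam⁻¹ • G1) ∧
    ((1 : Matrix (Fin p) (Fin p) FF) - lam⁻¹ • G1)⁻¹ * (lam⁻¹ • G2) =
      fromCols (1 : Matrix (Fin p) (Fin p) FF) (0 : Matrix (Fin p) (Fin q) FF) *
        (lamI (fromBlocks Dbar1 Cbar Bbar1 Abar))⁻¹ * mapF (fromRows Dbar2 Bbar2) := by
  intro G1 G2
  have hlam : (lam : FF) ≠ 0 := RatFunc.X_ne_zero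
  set A : Matrix (Fin p) (Fin p) FF := lam • 1 - mapF Dbar1 with hA
  set B : Matrix (Fin p) (Fin q) FF := -(mapF Cbar) with hB
  set C : Matrix (Fin q) (Fin p) FF := -(mapF Bbar1) with hC
  set D : Matrix (Fin q) (Fin q) FF := lamI Abar with hDdef
  have hblock : lamI (fromBlocks Dbar1 Cbar Bbar1 Abar) = fromBlocks A B C D := by
    show lam • (1 : Matrix (Fin p ⊕ Fin q) (Fin p ⊕ Fin q) FF)
        - (fromBlocks Dbar1 Cbar Bbar1 Abar).map (algebraMap ℝ FF) = _
    rw [← fromBlocks_one, fromBlocks_smul, fromBlocks_map, fromBlocks_sub']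
    simp [hA, hB, hC, hDdef, lamI, mapF]
  haveI iD : Invertible D := (lamI Abar).invertibleOfIsUnitDet (detLamI_isUnit Abar)
  haveI iL : Invertible (lamI (fromBlocks Dbar1 Cbar Bbar1 Abar)) :=
    (lamI _).invertibleOfIsUnitDet (detLamI_isUnit _)
  haveI iFB : Invertible (fromBlocks A B C D) := iL.copy _ hblock.symm
  haveI iS : Invertible (A - B * ⅟D * C) := invertibleOfFromBlocks₂₂Invertible A B C D
  have hDinv : (⅟D : Matrix (Fin q) (Fin q) FF) = D⁻¹ := invOf_eq_nonsing_inv D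
  have hS : A - B * ⅟D * C = lam • ((1 : Matrix (Fin p) (Fin p) FF) - lam⁻¹ • G1) := by
    rw [hDinv, hA, hB, hC]
    simp only [Matrix.neg_mul, Matrix.mul_neg, neg_neg, smul_sub, smul_smul,
      mul_inv_cancel₀ hlam, one_smul, G1, hDdef]
    abel
  have hSdet : IsUnit (A - B * ⅟D * C).det := isUnit_det_of_invertible _
  have hT : (1 : Matrix (Fin p) (Fin p) FF) - lam⁻¹ • G1 = lam⁻¹ • (A - B * ⅟D * C) := by
    rw [hS, smul_smul, inv_mul_cancel₀ hlam, one_smul]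
  have hTdet : IsUnit ((1 : Matrix (Fin p) (Fin p) FF) - lam⁻¹ • G1).det := by
    rw [hT, det_smul]
    exact (IsUnit.pow _ (isUnit_iff_ne_zero.mpr (inv_ne_zero hlam))).mul hSdet
  refine ⟨(Matrix.isUnit_iff_isUnit_det _).mpr hTdet, ?_⟩
  have hTS : lam⁻¹ • G2 =
      ((1 : Matrix (Fin p) (Fin p) FF) - lam⁻¹ • G1) * (⅟(A - B * ⅟D * C) * G2) := by
    rw [hT, Matrix.smul_mul, ← Matrix.mul_assoc, mul_invOf_self, Matrix.one_mul]
  have hLHS : ((1 : Matrix (Fin p) (Fin p) FF) - lam⁻¹ • G1)⁻¹ * (lam⁻¹ • G2) =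
      ⅟(A - B * ⅟D * C) * G2 := by
    rw [hTS, ← Matrix.mul_assoc, Matrix.nonsing_inv_mul _ hTdet, Matrix.one_mul]
  rw [hLHS, hblock, ← invOf_eq_nonsing_inv, invOf_fromBlocks₂₂_eq, mapF_fromRows,
    fromCols_mul_fromBlocks, fromCols_mul_fromRows]
  simp only [Matrix.one_mul, Matrix.zero_mul, add_zero, hB, Matrix.mul_neg, Matrix.neg_mul,
    neg_neg, hDinv, G2, hDdef]
  simp only [neg_zero, add_zero, Matrix.mul_add, Matrix.mul_assoc]
  simp only [invOf_eq_nonsing_inv]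
end
end

section
/- Assume (A12, A22) is observable and (A, B) is controllable. Then for every K ∈ ℝ^{(n−p)×p}: (i) for every μ ∈ ℂ the complexified stacked matrix [(A22 + K·A12) − μI_{n−p}; A12] has rank n−p, and (ii) for every μ ∈ ℂ the complexified matrix [(A22 + K·A12) − μI_{n−p}, A_K, K·B1 + B2] has rank n−p; that is, the order-(n−p) state-space realization ((A22+K·A12), [A_K, K·B1+B2], A12, [A11−A12·K, B1]) of the SRTR pair (W, V) is observable and controllable, hence minimal. -/
open Matrix Polynomial

set_option synthInstance.maxHeartbeats 1000000
set_option maxHeartbeats 1000000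

noncomputable section

section Aux

variable {n' m' : Type} [Fintype n'] [Fintype m']

lemma mapC_mul {k l o : Type} [Fintype l] (M : Matrix k l ℝ) (N : Matrix l o ℝ) :
    mapC (M * N) = mapC M * mapC N := by
  ext i j
  simp [mapC, Matrix.mul_apply]

lemma mapC_add {k l : Type} (M N : Matrix k l ℝ) : mapC (M + N) = mapC M + mapC N := by
  simp [mapC, Matrix.map_add]

lemma mapC_sub {k l : Type} (M N : Matrix k l ℝ) : mapC (M - N) = mapC M - mapC N := by
  simp [mapC, Matrix.map_sub]

lemma fromBlocks_sub'_s4 {k l o q : Type} (A A' : Matrix k l ℂ) (B B' : Matrix k o ℂ)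
    (C C' : Matrix q l ℂ) (D D' : Matrix q o ℂ) :
    fromBlocks A B C D - fromBlocks A' B' C' D' =
      fromBlocks (A - A') (B - B') (C - C') (D - D') := by
  ext i j
  rcases i with i | i <;> rcases j with j | j <;> simp [Matrix.fromBlocks]

lemma rank_eq_card_iff_surjective (M : Matrix n' m' ℂ) :
    M.rank = Fintype.card n' ↔ Function.Surjective M.mulVec := by
  constructor
  · intro h
    have htop : LinearMap.range M.mulVecLin = ⊤ := by
      apply Submodule.eq_top_of_finrank_eq
      rw [← Matrix.rank, h, Module.finrank_pi]
    intro y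
    obtain ⟨x, hx⟩ := LinearMap.range_eq_top.mp htop y
    exact ⟨x, hx⟩
  · intro h
    have htop : LinearMap.range M.mulVecLin = ⊤ := LinearMap.range_eq_top.mpr h
    rw [Matrix.rank, htop, finrank_top, Module.finrank_pi]

end Aux

/-- under observability and controllability, for every `K` the order-`(n-p)`
realization of the SRTR pair is observable and controllable, hence minimal. -/

theorem stmt_4 (p r m : ℕ) (hp : 0 < p) (hr : 0 < r) (hm : 0 < m)
    (A11 : Matrix (Fin p) (Fin p) ℝ) (A12 : Matrix (Fin p) (Fin r) ℝ)
    (A21 : Matrix (Fin r) (Fin p) ℝ) (A22 : Matrix (Fin r) (Fin r) ℝ)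
    (B1 : Matrix (Fin p) (Fin m) ℝ) (B2 : Matrix (Fin r) (Fin m) ℝ)
    (hobs : ObsPair A12 A22)
    (hctrb : CtrbPair (fromBlocks A11 A12 A21 A22) (fromRows B1 B2)) :
    ∀ K : Matrix (Fin r) (Fin p) ℝ,
      (∀ μ : ℂ, (fromRows (mapC (A22 + K * A12) - μ • (1 : Matrix (Fin r) (Fin r) ℂ))
          (mapC A12)).rank = r) ∧
      (∀ μ : ℂ, (fromCols (fromCols
          (mapC (A22 + K * A12) - μ • (1 : Matrix (Fin r) (Fin r) ℂ))
          (mapC (AKmat A11 A12 A21 A22 K))) (mapC (K * B1 + B2))).rank = r) := by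
  intro K
  constructor
  · -- observability
    intro μ
    have hK : mapC (A22 + K * A12) - μ • (1 : Matrix (Fin r) (Fin r) ℂ) =
        1 * (mapC A22 - μ • (1 : Matrix (Fin r) (Fin r) ℂ)) + mapC K * mapC A12 := by
      rw [mapC_add, mapC_mul, one_mul]; abel
    have key : fromRows (mapC (A22 + K * A12) - μ • (1 : Matrix (Fin r) (Fin r) ℂ))
        (mapC A12) =
        fromBlocks (1 : Matrix (Fin r) (Fin r) ℂ) (mapC K) 0 (1 : Matrix (Fin p) (Fin p) ℂ) *
          fromRows (mapC A22 - μ • (1 : Matrix (Fin r) (Fin r) ℂ)) (mapC A12) := by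
      rw [fromBlocks_mul_fromRows, fromRows_ext_iff]
      exact ⟨hK, by rw [Matrix.zero_mul, Matrix.one_mul, zero_add]⟩
    rw [key, Matrix.rank_mul_eq_right_of_isUnit_det, hobs μ]
    rw [det_fromBlocks_zero₂₁]
    simp
  · -- controllability
    intro μ
    set Kc := mapC K with hKc
    set Tc : Matrix (Fin p ⊕ Fin r) (Fin p ⊕ Fin r) ℂ := fromBlocks 1 0 Kc 1 with hTc
    set Ti : Matrix (Fin p ⊕ Fin r) (Fin p ⊕ Fin r) ℂ := fromBlocks 1 0 (-Kc) 1 with hTi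
    set Ac : Matrix (Fin p ⊕ Fin r) (Fin p ⊕ Fin r) ℂ := mapC (fromBlocks A11 A12 A21 A22)
      with hAc
    set Bc : Matrix (Fin p ⊕ Fin r) (Fin m) ℂ := mapC (fromRows B1 B2) with hBc
    have hAc' : Ac = fromBlocks (mapC A11) (mapC A12) (mapC A21) (mapC A22) := by
      rw [hAc]; exact Matrix.fromBlocks_map A11 A12 A21 A22 _
    have hBc' : Bc = fromRows (mapC B1) (mapC B2) := by
      rw [hBc]
      ext i j
      cases i <;> simp [mapC, fromRows_apply_inl, fromRows_apply_inr]
    have hone : (μ • (1 : Matrix (Fin p ⊕ Fin r) (Fin p ⊕ Fin r) ℂ)) =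
        fromBlocks (μ • 1) 0 0 (μ • 1) := by
      rw [← Matrix.fromBlocks_one, Matrix.fromBlocks_smul, smul_zero, smul_zero]
    -- the transformed pencil
    set d : Matrix (Fin r) (Fin r) ℂ :=
      mapC (A22 + K * A12) - μ • (1 : Matrix (Fin r) (Fin r) ℂ) with hd
    set c : Matrix (Fin r) (Fin p) ℂ := mapC (AKmat A11 A12 A21 A22 K) with hc
    set n2 : Matrix (Fin r) (Fin m) ℂ := mapC (K * B1 + B2) with hn2
    set Mh : Matrix (Fin p ⊕ Fin r) (Fin p ⊕ Fin r) ℂ :=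
      fromBlocks (mapC (A11 - A12 * K) - μ • 1) (mapC A12) c d with hMh
    set Nh : Matrix (Fin p ⊕ Fin r) (Fin m) ℂ := fromRows (mapC B1) n2 with hNh
    have hMeq : Tc * (Ac - μ • 1) * Ti = Mh := by
      rw [hTc, hTi, hAc', hone, hMh, fromBlocks_sub'_s4 _ _ _ _ _ _ _ _, Matrix.fromBlocks_multiply,
        Matrix.fromBlocks_multiply]
      rw [Matrix.fromBlocks_inj]
      refine ⟨?_, ?_, ?_, ?_⟩ <;>
        simp only [hc, hd, AKmat, mapC_sub, mapC_add, mapC_mul, ← hKc, Matrix.one_mul,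
          Matrix.mul_one, Matrix.zero_mul, Matrix.mul_zero, Matrix.mul_neg, Matrix.neg_mul,
          sub_zero, smul_zero, add_zero, zero_add, Matrix.sub_mul, Matrix.mul_sub,
          Matrix.add_mul, Matrix.mul_add, Matrix.smul_mul, Matrix.mul_smul] <;>
        try abel
    have hNeq : Tc * Bc = Nh := by
      rw [hTc, hBc', hNh, fromBlocks_mul_fromRows, hn2, mapC_add, mapC_mul, ← hKc,
        fromRows_ext_iff]
      exact ⟨by rw [Matrix.one_mul, Matrix.zero_mul, add_zero], by rw [Matrix.one_mul]⟩
    -- rank of the transformed full pencil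
    have hdetTc : IsUnit Tc.det := by
      rw [hTc, det_fromBlocks_zero₁₂]; simp
    have hdetD : IsUnit (fromBlocks Ti 0 0 (1 : Matrix (Fin m) (Fin m) ℂ)).det := by
      rw [det_fromBlocks_zero₁₂, hTi, det_fromBlocks_zero₁₂]; simp
    have hfull : (fromCols Mh Nh).rank = p + r := by
      have h1 : fromCols Mh Nh =
          Tc * (Matrix.fromCols (Ac - μ • 1) Bc * Matrix.fromBlocks Ti 0 0 (1 : Matrix (Fin m) (Fin m) ℂ)) := by
        rw [fromCols_mul_fromBlocks, Matrix.mul_fromCols, Matrix.mul_zero,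
          Matrix.mul_zero, add_zero, zero_add, Matrix.mul_one, ← Matrix.mul_assoc, hMeq, hNeq]
      rw [h1, Matrix.rank_mul_eq_right_of_isUnit_det _ _ hdetTc,
        Matrix.rank_mul_eq_left_of_isUnit_det _ _ hdetD]
      exact hctrb μ
    have hsurj : Function.Surjective (fromCols Mh Nh).mulVec := by
      rw [← rank_eq_card_iff_surjective, hfull]
      simp
    -- surjectivity of the target matrix
    suffices htar : Function.Surjective (fromCols (fromCols d c) n2).mulVec by
      have := (rank_eq_card_iff_surjective (fromCols (fromCols d c) n2)).mpr htar
      simpa using this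
    intro y
    obtain ⟨w, hw⟩ := hsurj (Sum.elim 0 y)
    set a : Fin p → ℂ := fun i => w (Sum.inl (Sum.inl i)) with ha
    set b : Fin r → ℂ := fun i => w (Sum.inl (Sum.inr i)) with hb
    set w2 : Fin m → ℂ := fun i => w (Sum.inr i) with hw2
    have hwdecomp : w = Sum.elim (Sum.elim a b) w2 := by
      funext i
      rcases i with (i | i) | i <;> rfl
    rw [hwdecomp, fromCols_mulVec_sumElim, hMh, hNh] at hw
    have hbot' : ∀ i, c.mulVec a i + d.mulVec b i + n2.mulVec w2 i = y i := by
      intro i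
      have := congrFun hw (Sum.inr i)
      simpa [Matrix.fromBlocks_mulVec, Matrix.fromRows_mulVec] using this
    refine ⟨Sum.elim (Sum.elim b a) w2, ?_⟩
    funext i
    rw [fromCols_mulVec_sumElim, fromCols_mulVec_sumElim]
    have := hbot' i
    simp only [Pi.add_apply] at this ⊢
    linear_combination this
end
end
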